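/- Let p ∈ (0,1) and θ ∈ (0,1). Let X be a geometric random variable with P(X = k) = (1−p)·p^k for k = 0, 1, 2, …, and let W be a random variable independent of X with P(W = 2) = θ and P(W = 3) = 1−θ. Then the distribution of W·X is not infinitely divisible. -/

import Mathlib

open MeasureTheory Set

/-- The `n`-fold additive self-convolution of a measure on `ℝ`
(`convPow ν 0 = δ₀`, the convolution identity). -/
noncomputable def convPow (ν : Measure ℝ) : ℕ → Measure ℝ
  | 0 => Measure.dirac 0
  | n + 1 => Measure.conv (convPow ν n) ν

/-- A probability measure `μ` on `ℝ` is infinitely divisible if for every `n ≥ 1` there is a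
probability measure `ν` with `μ = ν ∗ ⋯ ∗ ν` (`n` factors). -/
def IsInfinitelyDivisible (μ : Measure ℝ) : Prop :=
  ∀ n : ℕ, 0 < n → ∃ ν : Measure ℝ, IsProbabilityMeasure ν ∧ μ = convPow ν n

lemma countable_atoms (ν : Measure ℝ) [SFinite ν] : Set.Countable {x : ℝ | 0 < ν {x}} :=
  Measure.countable_meas_pos_of_disjoint_iUnion (fun x => measurableSet_singleton x)
    (fun x y hxy => by simpa [Function.onFun] using hxy)

lemma conv_singleton_ge (ν : Measure ℝ) [IsProbabilityMeasure ν] (x y : ℝ) :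
    ν {x} * ν {y} ≤ (ν.conv ν) {x + y} := by
  rw [Measure.conv, Measure.map_apply (by fun_prop) (measurableSet_singleton _)]
  calc ν {x} * ν {y} = (ν.prod ν) ({x} ×ˢ {y}) := (Measure.prod_prod _ _).symm
    _ ≤ _ := measure_mono (by rintro ⟨a, b⟩ ⟨ha, hb⟩; simp_all)

lemma conv_singleton_pos (ν : Measure ℝ) [IsProbabilityMeasure ν] (s : ℝ)
    (h : 0 < (ν.conv ν) {s}) : ∃ x y, x + y = s ∧ 0 < ν {x} ∧ 0 < ν {y} := by
  by_contra hc
  push_neg at hc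
  rw [Measure.conv, Measure.map_apply (by fun_prop) (measurableSet_singleton _),
    Measure.prod_apply ((measurableSet_singleton s).preimage
      (by fun_prop : Measurable (fun p : ℝ × ℝ => p.1 + p.2)))] at h
  have hset : ∀ x : ℝ, (Prod.mk x ⁻¹' ((fun p : ℝ × ℝ => p.1 + p.2) ⁻¹' {s})) = {s - x} := by
    intro x; ext y; simp [eq_sub_iff_add_eq']
  simp_rw [hset] at h
  have hT : Set.Countable {x : ℝ | 0 < ν {s - x}} := by
    refine ((countable_atoms ν).image (fun a => s - a)).mono ?_
    intro x hx
    exact ⟨s - x, hx, by ring⟩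
  have hTnull : ν {x : ℝ | 0 < ν {s - x}} = 0 := by
    rw [← Set.biUnion_of_singleton {x : ℝ | 0 < ν {s - x}},
      measure_biUnion_null_iff hT]
    intro x hx
    by_contra hxne
    have hxpos : 0 < ν {x} := pos_iff_ne_zero.mpr hxne
    have h2 := hc x (s - x) (by ring) hxpos
    exact absurd hx (by simpa using h2)
  have hzero : (∫⁻ x, ν {s - x} ∂ν) = 0 := by
    have hae : (fun x => ν {s - x}) =ᵐ[ν] 0 := by
      refine measure_mono_null ?_ hTnull
      intro x hx
      simp only [Pi.zero_apply] at hx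
      exact pos_iff_ne_zero.mpr hx
    rw [lintegral_congr_ae hae]; simp
  rw [hzero] at h
  exact lt_irrefl _ h

set_option maxHeartbeats 1000000 in
theorem prod_geometric_two_three_not_infDiv {Ω : Type*} [MeasurableSpace Ω]
    (ℙ : Measure Ω) [IsProbabilityMeasure ℙ]
    (p θ : ℝ) (hp : p ∈ Ioo (0 : ℝ) 1) (hθ : θ ∈ Ioo (0 : ℝ) 1)
    (X W : Ω → ℝ) (hX : Measurable X) (hW : Measurable W)
    (hXlaw : Measure.map X ℙ =
      Measure.sum fun k : ℕ => ENNReal.ofReal ((1 - p) * p ^ k) • Measure.dirac (k : ℝ))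
    (hWlaw : Measure.map W ℙ =
      ENNReal.ofReal θ • Measure.dirac (2 : ℝ) + ENNReal.ofReal (1 - θ) • Measure.dirac (3 : ℝ))
    (hindep : ProbabilityTheory.IndepFun W X ℙ) :
    ¬ IsInfinitelyDivisible (Measure.map (fun ω => W ω * X ω) ℙ) := by
  obtain ⟨hp0, hp1⟩ := hp
  obtain ⟨hθ0, hθ1⟩ := hθ
  intro hID
  set μ := Measure.map (fun ω => W ω * X ω) ℙ with hμdef
  have hmul : Measurable fun ω => W ω * X ω := hW.mul hX
  -- lower bound on atoms of μ
  have key : ∀ w x : ℝ, Measure.map W ℙ {w} * Measure.map X ℙ {x} ≤ μ {w * x} := by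
    intro w x
    rw [hμdef, Measure.map_apply hmul (measurableSet_singleton _),
      Measure.map_apply hW (measurableSet_singleton _),
      Measure.map_apply hX (measurableSet_singleton _),
      ← hindep.measure_inter_preimage_eq_mul _ _ (measurableSet_singleton _)
        (measurableSet_singleton _)]
    refine measure_mono ?_
    rintro ω ⟨h1, h2⟩
    simp only [mem_preimage, mem_singleton_iff] at *
    rw [h1, h2]
  have hW2 : Measure.map W ℙ {(2 : ℝ)} = ENNReal.ofReal θ := by
    rw [hWlaw]; simp [Measure.dirac_apply]
  have hW3 : Measure.map W ℙ {(3 : ℝ)} = ENNReal.ofReal (1 - θ) := by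
    rw [hWlaw]; simp [Measure.dirac_apply]
  have hXk : ∀ k : ℕ, ENNReal.ofReal ((1 - p) * p ^ k) ≤ Measure.map X ℙ {(k : ℝ)} := by
    intro k
    rw [hXlaw, Measure.sum_apply _ (measurableSet_singleton _)]
    calc ENNReal.ofReal ((1 - p) * p ^ k)
        = (fun k : ℕ => (ENNReal.ofReal ((1 - p) * p ^ k) • Measure.dirac ((k : ℝ))) {((k : ℕ) : ℝ)}) k := by
          simp [Measure.dirac_apply]
      _ ≤ _ := ENNReal.le_tsum k
  have hgeo : ∀ k : ℕ, (0 : ℝ) < (1 - p) * p ^ k := by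
    intro k; have : (0:ℝ) < 1 - p := by linarith
    positivity
  have hatom : ∀ (w : ℝ) (k : ℕ), 0 < Measure.map W ℙ {w} → 0 < μ {w * (k : ℝ)} := by
    intro w k hw
    have hx : 0 < Measure.map X ℙ {(k : ℝ)} :=
      lt_of_lt_of_le (ENNReal.ofReal_pos.mpr (hgeo k)) (hXk k)
    exact lt_of_lt_of_le (ENNReal.mul_pos hw.ne' hx.ne') (key w (k : ℝ))
  have hWpos2 : 0 < Measure.map W ℙ {(2 : ℝ)} := hW2 ▸ ENNReal.ofReal_pos.mpr hθ0
  have hWpos3 : 0 < Measure.map W ℙ {(3 : ℝ)} := hW3 ▸ ENNReal.ofReal_pos.mpr (by linarith)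
  have hμzero : 0 < μ {(0 : ℝ)} := by
    have := hatom 2 0 hWpos2; norm_num at this; exact this
  have hμtwo : 0 < μ {(2 : ℝ)} := by
    have := hatom 2 1 hWpos2; norm_num at this; exact this
  have hμthree : 0 < μ {(3 : ℝ)} := by
    have := hatom 3 1 hWpos3; norm_num at this; exact this
  -- atoms of μ lie in S
  have hWnull : ℙ (W ⁻¹' ({2, 3} : Set ℝ)ᶜ) = 0 := by
    rw [← Measure.map_apply hW (by measurability), hWlaw]
    simp [Measure.dirac_apply']
  have hXnull : ℙ (X ⁻¹' (Set.range ((↑) : ℕ → ℝ))ᶜ) = 0 := by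
    have hms : MeasurableSet (Set.range ((↑) : ℕ → ℝ))ᶜ :=
      (Set.countable_range _).measurableSet.compl
    rw [← Measure.map_apply hX hms, hXlaw, Measure.sum_apply _ hms]
    simp [Measure.dirac_apply' _ hms]
  have PS : ∀ z : ℝ, 0 < μ {z} → ∃ k : ℕ, z = 2 * (k : ℝ) ∨ z = 3 * (k : ℝ) := by
    intro z hz
    rw [hμdef, Measure.map_apply hmul (measurableSet_singleton z)] at hz
    set E := (fun ω => W ω * X ω) ⁻¹' {z}
    set N := W ⁻¹' ({2, 3} : Set ℝ)ᶜ ∪ X ⁻¹' (Set.range ((↑) : ℕ → ℝ))ᶜ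
    have hNnull : ℙ N = 0 := measure_union_null hWnull hXnull
    have hnonempty : (E ∩ Nᶜ).Nonempty := by
      by_contra hempty
      rw [Set.not_nonempty_iff_eq_empty] at hempty
      have hEN : E ⊆ N := by
        intro ω hω
        by_contra hnw
        exact (Set.eq_empty_iff_forall_notMem.mp hempty ω) ⟨hω, hnw⟩
      exact absurd (measure_mono_null hEN hNnull) hz.ne'
    obtain ⟨ω, hωE, hωN⟩ := hnonempty
    rw [Set.mem_compl_iff, Set.mem_union, not_or] at hωN
    obtain ⟨hωW, hωX⟩ := hωN
    simp only [Set.mem_preimage, Set.mem_compl_iff, not_not] at hωW hωX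
    obtain ⟨k, hk⟩ := hωX
    have hWval : W ω = 2 ∨ W ω = 3 := by simpa using hωW
    have hωE' : W ω * X ω = z := hωE
    refine ⟨k, ?_⟩
    rcases hWval with h | h
    · left; rw [← hωE', h, hk]
    · right; rw [← hωE', h, hk]
  -- now use infinite divisibility with n = 2
  obtain ⟨ν, hνprob, hνeq⟩ := hID 2 (by norm_num)
  haveI := hνprob
  have hμconv : μ = ν.conv ν := by
    rw [hνeq]
    show Measure.conv (Measure.conv (Measure.dirac 0) ν) ν = ν.conv ν
    rw [Measure.dirac_zero_conv]
  -- S-membership of sums of atoms of ν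
  have hadd : ∀ x y : ℝ, 0 < ν {x} → 0 < ν {y} →
      ∃ k : ℕ, x + y = 2 * (k : ℝ) ∨ x + y = 3 * (k : ℝ) := by
    intro x y hx hy
    refine PS _ (lt_of_lt_of_le (ENNReal.mul_pos hx.ne' hy.ne') ?_)
    rw [hμconv]
    exact conv_singleton_ge ν x y
  -- the atom obtained from μ{0} is at 0
  obtain ⟨e, f, hef, he, hf⟩ := conv_singleton_pos ν 0 (by rw [← hμconv]; exact hμzero)
  have hSnn : ∀ x y : ℝ, 0 < ν {x} → 0 < ν {y} → 0 ≤ x + y := by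
    intro x y hx hy
    obtain ⟨k, hk | hk⟩ := hadd x y hx hy <;> rw [hk] <;> positivity
  have he0 : e = 0 := by
    have h1 := hSnn e e he he
    have h2 := hSnn f f hf hf
    linarith
  rw [he0] at he
  -- every atom of ν is in S
  have hmem : ∀ x : ℝ, 0 < ν {x} → ∃ k : ℕ, x = 2 * (k : ℝ) ∨ x = 3 * (k : ℝ) := by
    intro x hx
    simpa using hadd x 0 hx he
  -- range lemma
  have hrange : ∀ x : ℝ, 0 < ν {x} → x = 0 ∨ x = 2 ∨ x = 3 ∨ 4 ≤ x := by
    intro x hx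
    obtain ⟨k, hk | hk⟩ := hmem x hx
    · match k, hk with
      | 0, hk => left; simpa using hk
      | 1, hk => right; left; norm_num at hk; exact hk
      | (n+2), hk =>
        right; right; right
        rw [hk]
        have : (2 : ℝ) ≤ (n + 2 : ℕ) := by exact_mod_cast Nat.le_add_left 2 n
        push_cast at this ⊢
        linarith
    · match k, hk with
      | 0, hk => left; simpa using hk
      | 1, hk => right; right; left; norm_num at hk; exact hk
      | (n+2), hk =>
        right; right; right
        rw [hk]
        have : (2 : ℝ) ≤ (n + 2 : ℕ) := by exact_mod_cast Nat.le_add_left 2 n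
        push_cast at this ⊢
        linarith
  have hnn : ∀ x : ℝ, 0 < ν {x} → 0 ≤ x := by
    intro x hx
    rcases hrange x hx with h | h | h | h <;> linarith
  -- ν has an atom at 2
  obtain ⟨a, b, hab, ha, hb⟩ := conv_singleton_pos ν 2 (by rw [← hμconv]; exact hμtwo)
  have hν2 : 0 < ν {(2 : ℝ)} := by
    rcases hrange a ha with h | h | h | h
    · rw [h, zero_add] at hab; rwa [hab] at hb
    · rwa [h] at ha
    · have := hnn b hb; linarith
    · have := hnn b hb; linarith
  -- ν has an atom at 3
  obtain ⟨c, d, hcd, hc, hd⟩ := conv_singleton_pos ν 3 (by rw [← hμconv]; exact hμthree)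
  have hν3 : 0 < ν {(3 : ℝ)} := by
    rcases hrange c hc with h | h | h | h
    · rw [h, zero_add] at hcd; rwa [hcd] at hd
    · have hd1 : d = 1 := by linarith
      rcases hrange d hd with h2 | h2 | h2 | h2 <;> rw [hd1] at h2 <;> norm_num at h2
    · rwa [h] at hc
    · have := hnn d hd; linarith
  -- contradiction: 5 = 2 + 3 would be an atom of μ
  obtain ⟨k, hk⟩ := hadd 2 3 hν2 hν3
  norm_num at hk
  rcases hk with hk | hk
  · have : (5 : ℕ) = 2 * k := by exact_mod_cast hk
    omega
  · have : (5 : ℕ) = 3 * k := by exact_mod_cast hk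
    omega
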